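/- Let y = (y_1,…,y_n) be a strictly increasing list of n positive integers (y_1 < y_2 < ⋯ < y_n). Then PA^inv_n(y) = {(1,1,…,1)}, i.e., y is minimally invariant. -/

import Mathlib

open Classical in
/-- One car attempts to park on a one-way street with spots `1, …, m`: given the set
`occ` of occupied spots, the car with preference `p` and length `l` parks in spots
`j, j+1, …, j+l-1` for the least `j ≥ p` such that these spots all exist (are `≤ m`)
and are unoccupied; returns the new set of occupied spots, or `none` if parking fails. -/
noncomputable def parkOne (m : ℕ) (occ : Finset ℕ) (p l : ℕ) : Option (Finset ℕ) :=
  if h : ∃ j, p ≤ j ∧ j + l ≤ m + 1 ∧ ∀ k ∈ Finset.Ico j (j + l), k ∉ occ then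
    some (occ ∪ Finset.Ico (Nat.find h) (Nat.find h + l))
  else none

/-- Run the parking-assortment process for the cars `(preference, length)` in order. -/
noncomputable def parkList (m : ℕ) : List (ℕ × ℕ) → Finset ℕ → Option (Finset ℕ)
  | [], occ => some occ
  | c :: rest, occ => (parkOne m occ c.1 c.2).bind (parkList m rest)

/-- `x` is a parking assortment for the list of car lengths `y`. -/
def IsPA (y x : List ℕ) : Prop :=
  x.length = y.length ∧ (∀ a ∈ x, 1 ≤ a ∧ a ≤ y.sum) ∧
    (parkList y.sum (x.zip y) ∅).isSome

/-- `PA y` is the set of parking assortments for `y`. -/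
def PA (y : List ℕ) : Set (List ℕ) := {x | IsPA y x}

/-- `PAinv y` is the set of (permutation-)invariant parking assortments for `y`:
those preference lists all of whose rearrangements are parking assortments for `y`. -/
def PAinv (y : List ℕ) : Set (List ℕ) := {x | ∀ x', x'.Perm x → IsPA y x'}

/-- `y` is minimally invariant if the all-ones list is the only invariant
parking assortment for `y`. -/
def MinInv (y : List ℕ) : Prop := PAinv y = {List.replicate y.length 1}

lemma parkOne_eq_some {m : ℕ} {occ : Finset ℕ} {p l j : ℕ}
    (h1 : p ≤ j) (h2 : j + l ≤ m + 1) (h3 : ∀ k ∈ Finset.Ico j (j + l), k ∉ occ)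
    (h4 : ∀ i, i < j → p ≤ i → i + l ≤ m + 1 → ∃ k ∈ Finset.Ico i (i + l), k ∈ occ) :
    parkOne m occ p l = some (occ ∪ Finset.Ico j (j + l)) := by
  have hex : ∃ j', p ≤ j' ∧ j' + l ≤ m + 1 ∧ ∀ k ∈ Finset.Ico j' (j' + l), k ∉ occ :=
    ⟨j, h1, h2, h3⟩
  unfold parkOne
  rw [dif_pos hex]
  have hfind : Nat.find hex = j := by
    rw [Nat.find_eq_iff]
    refine ⟨⟨h1, h2, h3⟩, fun i hi => ?_⟩
    rintro ⟨hpi, hil, hfree⟩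
    obtain ⟨k, hk, hkocc⟩ := h4 i hi hpi hil
    exact hfree k hk hkocc
  rw [hfind]

lemma parkOne_none {m : ℕ} {occ : Finset ℕ} {p l : ℕ}
    (h : ∀ j, p ≤ j → j + l ≤ m + 1 → ∃ k ∈ Finset.Ico j (j + l), k ∈ occ) :
    parkOne m occ p l = none := by
  unfold parkOne
  rw [dif_neg]
  rintro ⟨j, h1, h2, h3⟩
  obtain ⟨k, hk, hkocc⟩ := h j h1 h2
  exact h3 k hk hkocc

lemma parkOne_some {m : ℕ} {occ occ' : Finset ℕ} {p l : ℕ}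
    (h : parkOne m occ p l = some occ') :
    ∃ j, p ≤ j ∧ j + l ≤ m + 1 ∧ (∀ k ∈ Finset.Ico j (j + l), k ∉ occ) ∧
      occ' = occ ∪ Finset.Ico j (j + l) := by
  unfold parkOne at h
  split at h
  case isTrue hex =>
    obtain ⟨h1, h2, h3⟩ := Nat.find_spec hex
    exact ⟨Nat.find hex, h1, h2, h3, (Option.some_inj.mp h).symm⟩
  case isFalse => simp at h

lemma parkList_card (m : ℕ) : ∀ (cars : List (ℕ × ℕ)) (occ F : Finset ℕ),
    parkList m cars occ = some F → (∀ car ∈ cars, 1 ≤ car.1) →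
    F ⊆ occ ∪ Finset.Ico 1 (m + 1) ∧ F.card = occ.card + (cars.map Prod.snd).sum := by
  intro cars
  induction cars with
  | nil =>
    intro occ F h _
    simp only [parkList, Option.some_inj] at h
    subst h
    simp
  | cons car rest ih =>
    intro occ F h hpref
    simp only [parkList] at h
    cases hp : parkOne m occ car.1 car.2 with
    | none => rw [hp] at h; simp at h
    | some occ' =>
      rw [hp] at h
      simp only [Option.bind_some] at h
      obtain ⟨j, hj1, hj2, hj3, rfl⟩ := parkOne_some hp
      have h1 : 1 ≤ car.1 := hpref car (List.mem_cons_self)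
      have hm := ih _ F h (fun c hc => hpref c (List.mem_cons_of_mem _ hc))
      constructor
      · refine hm.1.trans ?_
        intro z hz
        simp only [Finset.mem_union, Finset.mem_Ico] at *
        rcases hz with (hz | hz) | hz
        · exact Or.inl hz
        · exact Or.inr ⟨by omega, by omega⟩
        · exact Or.inr hz
      · rw [hm.2, Finset.card_union_of_disjoint, Nat.card_Ico]
        · simp only [List.map_cons, List.sum_cons]
          omega
        · rw [Finset.disjoint_right]
          intro a ha
          exact fun hao => hj3 a ha hao

/-- If every car either prefers a spot `≥ c` or is too long to fit left of `c`,
then spot `p < c` never gets occupied. -/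
lemma park_l0 (m c p : ℕ) (hpc : p < c) : ∀ (cars : List (ℕ × ℕ)) (occ F : Finset ℕ),
    parkList m cars occ = some F →
    (∀ car ∈ cars, 1 ≤ car.1 ∧ (c ≤ car.1 ∨ c < p + car.2)) →
    Finset.Ico 1 p ⊆ occ → p ∉ occ → c ∈ occ → p ∉ F := by
  intro cars
  induction cars with
  | nil =>
    intro occ F h _ _ hp _
    simp only [parkList, Option.some_inj] at h
    subst h; exact hp
  | cons car rest ih =>
    intro occ F h hcars hsub hp hc
    simp only [parkList] at h
    cases hp1 : parkOne m occ car.1 car.2 with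
    | none => rw [hp1] at h; simp at h
    | some occ' =>
      rw [hp1] at h
      simp only [Option.bind_some] at h
      obtain ⟨j, hj1, hj2, hj3, rfl⟩ := parkOne_some hp1
      obtain ⟨hcar1, hcar2⟩ := hcars car (List.mem_cons_self)
      have hpnotin : p ∉ Finset.Ico j (j + car.2) := by
        simp only [Finset.mem_Ico]
        rintro ⟨hjp, hpl⟩
        rcases hcar2 with hc1 | hc2
        · omega
        · by_cases hjp' : j < p
          · have hjo : j ∈ occ := hsub (by simp only [Finset.mem_Ico]; omega)
            exact hj3 j (by simp only [Finset.mem_Ico]; omega) hjo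
          · have hj : j = p := by omega
            subst hj
            exact hj3 c (by simp only [Finset.mem_Ico]; omega) hc
      refine ih _ F h (fun d hd => hcars d (List.mem_cons_of_mem _ hd))
        (hsub.trans Finset.subset_union_left) ?_ (Finset.mem_union_left _ hc)
      simp only [Finset.mem_union]
      rintro (h' | h')
      · exact hp h'
      · exact hpnotin h'

/-- Key structural lemma: starting from `Ico 1 p ∪ Ico c q`, a run of preference-1 cars
with nondecreasing lengths followed by cars preferring spots `≥ c` can fill the street
completely only if some prefix of the preference-1 cars exactly fills `[p, c)`. -/
lemma park_l1 (m c : ℕ) (hcm : c ≤ m) : ∀ (L : List ℕ) (big : List (ℕ × ℕ)) (p q : ℕ),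
    parkList m ((L.map fun l => ((1 : ℕ), l)) ++ big) (Finset.Ico 1 p ∪ Finset.Ico c q) =
      some (Finset.Ico 1 (m + 1)) →
    1 ≤ p → p ≤ c → c < q → q ≤ m + 1 →
    (∀ l ∈ L, 1 ≤ l) → L.Pairwise (· ≤ ·) →
    (∀ car ∈ big, 1 ≤ car.1 ∧ c ≤ car.1) →
    ∃ k, k ≤ L.length ∧ p + (L.take k).sum = c := by
  intro L
  induction L with
  | nil =>
    intro big p q h hp1 hpc hcq hq hL hLpw hbig
    rcases eq_or_lt_of_le hpc with rfl | hlt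
    · exact ⟨0, by simp, by simp⟩
    · exfalso
      have hnot := park_l0 m c p hlt big _ _ (by simpa using h)
        (fun car hc => ⟨(hbig car hc).1, Or.inl (hbig car hc).2⟩)
        Finset.subset_union_left
        (by simp only [Finset.mem_union, Finset.mem_Ico]; omega)
        (by simp only [Finset.mem_union, Finset.mem_Ico]; omega)
      exact hnot (by simp only [Finset.mem_Ico]; omega)
  | cons l L' ih =>
    intro big p q h hp1 hpc hcq hq hL hLpw hbig
    rcases eq_or_lt_of_le hpc with rfl | hlt
    · exact ⟨0, by simp, by simp⟩
    · have hl1 : 1 ≤ l := hL l (List.mem_cons_self)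
      by_cases hfit : p + l ≤ c
      · have hpark : parkOne m (Finset.Ico 1 p ∪ Finset.Ico c q) 1 l =
            some ((Finset.Ico 1 p ∪ Finset.Ico c q) ∪ Finset.Ico p (p + l)) := by
          apply parkOne_eq_some hp1 (by omega)
          · intro k hk
            simp only [Finset.mem_Ico] at hk
            simp only [Finset.mem_union, Finset.mem_Ico]
            omega
          · intro i hi hi1 _
            exact ⟨i, by simp only [Finset.mem_Ico]; omega,
              by simp only [Finset.mem_union, Finset.mem_Ico]; omega⟩
        have hunion : (Finset.Ico 1 p ∪ Finset.Ico c q) ∪ Finset.Ico p (p + l) =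
            Finset.Ico 1 (p + l) ∪ Finset.Ico c q := by
          ext z
          simp only [Finset.mem_union, Finset.mem_Ico]
          omega
        simp only [List.map_cons, List.cons_append, parkList] at h
        rw [hpark] at h
        simp only [Option.bind_some] at h
        rw [hunion] at h
        obtain ⟨k, hk, hsum⟩ := ih big (p + l) q h (by omega) hfit hcq hq
          (fun a ha => hL a (List.mem_cons_of_mem _ ha)) hLpw.of_cons hbig
        refine ⟨k + 1, by simpa using Nat.succ_le_succ hk, ?_⟩
        rw [List.take_succ_cons, List.sum_cons]
        omega
      · exfalso
        have hrel : ∀ l'' ∈ L', l ≤ l'' := (List.pairwise_cons.mp hLpw).1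
        have hnot := park_l0 m c p hlt _ _ _ h ?_
          Finset.subset_union_left
          (by simp only [Finset.mem_union, Finset.mem_Ico]; omega)
          (by simp only [Finset.mem_union, Finset.mem_Ico]; omega)
        · exact hnot (by simp only [Finset.mem_Ico]; omega)
        · intro car hcar
          rcases List.mem_append.mp hcar with hm | hm
          · obtain ⟨l'', hl'', rfl⟩ := List.mem_map.mp hm
            refine ⟨le_refl 1, Or.inr ?_⟩
            rcases List.mem_cons.mp hl'' with rfl | hmem
            · omega
            · have := hrel _ hmem; omega
          · exact ⟨(hbig car hm).1, Or.inl (hbig car hm).2⟩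

lemma zipRep (B : List ℕ) : ∀ (t : ℕ) (A : List ℕ),
    (List.replicate t 1 ++ B).zip A =
      (A.take t).map (fun l => ((1 : ℕ), l)) ++ B.zip (A.drop t) := by
  intro t
  induction t with
  | zero => intro A; simp
  | succ t iht =>
    intro A
    cases A with
    | nil => simp
    | cons a A =>
      simp only [List.replicate_succ, List.cons_append, List.zip_cons_cons,
        List.take_succ_cons, List.map_cons, List.drop_succ_cons, iht]

lemma ones_park (m : ℕ) : ∀ (ys : List ℕ) (s : ℕ), (∀ l ∈ ys, 1 ≤ l) → s + ys.sum ≤ m →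
    parkList m ((List.replicate ys.length 1).zip ys) (Finset.Ico 1 (s + 1)) =
      some (Finset.Ico 1 (s + ys.sum + 1)) := by
  intro ys
  induction ys with
  | nil => intro s _ _; simp [parkList]
  | cons l ys ih =>
    intro s h1 h2
    have hl : 1 ≤ l := h1 l (List.mem_cons_self)
    have hsum : s + (l + ys.sum) ≤ m := by simpa [List.sum_cons] using h2
    have hpark : parkOne m (Finset.Ico 1 (s + 1)) 1 l =
        some (Finset.Ico 1 (s + 1) ∪ Finset.Ico (s + 1) (s + 1 + l)) := by
      apply parkOne_eq_some (by omega) (by omega)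
      · intro k hk
        simp only [Finset.mem_Ico] at hk ⊢
        omega
      · intro i hi hi1 _
        exact ⟨i, by simp only [Finset.mem_Ico]; omega, by simp only [Finset.mem_Ico]; omega⟩
    have hunion : Finset.Ico 1 (s + 1) ∪ Finset.Ico (s + 1) (s + 1 + l) =
        Finset.Ico 1 (s + l + 1) := by
      ext z
      simp only [Finset.mem_union, Finset.mem_Ico]
      omega
    simp only [List.length_cons, List.replicate_succ, List.zip_cons_cons, parkList]
    rw [hpark]
    simp only [Option.bind_some]
    rw [hunion]
    have hih := ih (s + l) (fun a ha => h1 a (List.mem_cons_of_mem _ ha)) (by omega)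
    simp only [List.zip] at hih ⊢
    rw [hih]
    congr 2
    simp only [List.sum_cons]
    omega

lemma arith_contra (y1 y2 : ℕ) (A : List ℕ) (h12 : y1 < y2) (hA : ∀ b ∈ A, y2 < b)
    (i j : ℕ) : y1 + (A.take j).sum ≠ y2 + (A.take i).sum := by
  have hmono : ∀ a b : ℕ, a ≤ b → (A.take a).sum ≤ (A.take b).sum := by
    intro a b hab
    calc (A.take a).sum = ((A.take b).take a).sum := by rw [List.take_take, min_eq_left hab]
    _ ≤ ((A.take b).take a).sum + ((A.take b).drop a).sum := Nat.le_add_right _ _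
    _ = (A.take b).sum := by rw [← List.sum_append, List.take_append_drop]
  set j₀ := min j A.length with hj₀
  have hjj : (A.take j).sum = (A.take j₀).sum := by
    rcases le_or_gt j A.length with hle | hlt
    · rw [hj₀, min_eq_left hle]
    · rw [List.take_of_length_le (le_of_lt hlt), hj₀, min_eq_right (le_of_lt hlt),
        List.take_length]
  rcases le_or_gt j₀ i with hle | hlt
  · have := hmono _ _ hle
    omega
  · have hilen : i < A.length := lt_of_lt_of_le hlt (min_le_right _ _)
    have hsucc : (A.take (i + 1)).sum = (A.take i).sum + A[i] := by
      rw [List.take_succ, List.getElem?_eq_getElem hilen,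
        Option.toList_some, List.sum_append, List.sum_cons, List.sum_nil]
      omega
    have hbig := hA _ (List.getElem_mem hilen)
    have := hmono (i + 1) j₀ hlt
    omega

lemma run_full (y x : List ℕ) (F : Finset ℕ) (hlen : x.length = y.length)
    (hpref : ∀ a ∈ x, 1 ≤ a)
    (h : parkList y.sum (x.zip y) ∅ = some F) : F = Finset.Ico 1 (y.sum + 1) := by
  have hc := parkList_card y.sum (x.zip y) ∅ F h (by
    rintro ⟨a, b⟩ hcar
    exact hpref a (List.of_mem_zip hcar).1)
  have hsnd : (x.zip y).map Prod.snd = y := List.map_snd_zip (le_of_eq hlen.symm)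
  refine Finset.eq_of_subset_of_card_le ?_ ?_
  · simpa using hc.1
  · rw [hc.2, hsnd, Nat.card_Ico, Finset.card_empty]
    omega

theorem stmt12 (y : List ℕ) (hy : ∀ a ∈ y, 0 < a) (hne : y ≠ [])
    (hinc : y.Chain' (· < ·)) :
    PAinv y = {List.replicate y.length 1} := by
  have hpw : y.Pairwise (· < ·) := List.isChain_iff_pairwise.mp hinc
  apply Set.eq_of_subset_of_subset
  · -- hard direction: any invariant assortment is all ones
    intro x hxinv
    simp only [PAinv, Set.mem_setOf_eq] at hxinv
    simp only [Set.mem_singleton_iff]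
    obtain ⟨hlen, hbdd, hsome⟩ := hxinv x (List.Perm.refl x)
    rw [List.eq_replicate_iff]
    refine ⟨hlen, ?_⟩
    by_contra hne1
    push_neg at hne1
    obtain ⟨a0, ha0x, ha0⟩ := hne1
    have hSne : {a | a ∈ x ∧ 2 ≤ a}.Nonempty :=
      ⟨a0, ha0x, by have := (hbdd a0 ha0x).1; omega⟩
    set c := sInf {a | a ∈ x ∧ 2 ≤ a} with hcdef
    obtain ⟨hcx, hc2⟩ := Nat.sInf_mem hSne
    have hmin : ∀ b ∈ x, b = 1 ∨ c ≤ b := by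
      intro b hb
      rcases Nat.lt_or_ge b 2 with h | h
      · left; have := (hbdd b hb).1; omega
      · right; exact Nat.sInf_le ⟨hb, h⟩
    have hcm : c ≤ y.sum := (hbdd c hcx).2
    -- split the remaining entries into ones and entries ≥ c
    obtain ⟨t, B, hBc, hpermr⟩ : ∃ t B, (∀ b ∈ B, 1 ≤ b ∧ c ≤ b) ∧
        (List.replicate t 1 ++ B).Perm (x.erase c) := by
      refine ⟨(x.erase c).count 1, (x.erase c).filter (fun b => !(b == 1)), ?_, ?_⟩
      · intro b hb
        have hbx : b ∈ x := List.mem_of_mem_erase (List.mem_of_mem_filter hb)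
        have hb1 : b ≠ 1 := by simpa using List.of_mem_filter hb
        rcases hmin b hbx with h | h
        · exact absurd h hb1
        · exact ⟨(hbdd b hbx).1, h⟩
      · have hones : (x.erase c).filter (fun b => (b == 1)) =
            List.replicate ((x.erase c).count 1) 1 := by
          rw [List.eq_replicate_iff]
          constructor
          · rw [List.count, List.countP_eq_length_filter]
          · intro b hb
            simpa using List.of_mem_filter hb
        rw [← hones]
        exact List.filter_append_perm _ _
    obtain ⟨y1, A, rfl⟩ : ∃ y1 A, y = y1 :: A := by
      cases y with
      | nil => exact absurd rfl hne
      | cons a l => exact ⟨a, l, rfl⟩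
    have hy1 : 1 ≤ y1 := hy y1 (List.mem_cons_self)
    have hperm1 : (c :: (List.replicate t 1 ++ B)).Perm x :=
      (hpermr.cons c).trans (List.perm_cons_erase hcx).symm
    obtain ⟨hlen1, hbdd1, hsome1⟩ := hxinv _ hperm1
    obtain ⟨F, hF⟩ := Option.isSome_iff_exists.mp hsome1
    have hFfull : F = Finset.Ico 1 ((y1 :: A).sum + 1) :=
      run_full _ _ _ hlen1 (fun a ha => (hbdd1 a ha).1) hF
    rw [hFfull, List.zip_cons_cons] at hF
    simp only [parkList] at hF
    rcases le_or_gt (c + y1) ((y1 :: A).sum + 1) with hcy1 | hcy1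
    swap
    · have hnone : parkOne ((y1 :: A).sum) ∅ c y1 = none :=
        parkOne_none (fun j hj1 hj2 => (by omega : False).elim)
      rw [hnone] at hF
      simp at hF
    have hpark1 : parkOne ((y1 :: A).sum) ∅ c y1 = some (∅ ∪ Finset.Ico c (c + y1)) :=
      parkOne_eq_some le_rfl hcy1 (by simp) (fun i hi h1 _ => absurd h1 (by omega))
    rw [hpark1] at hF
    simp only [Option.bind_some] at hF
    rw [zipRep] at hF
    have hocc1 : (∅ : Finset ℕ) ∪ Finset.Ico c (c + y1) =
        Finset.Ico 1 1 ∪ Finset.Ico c (c + y1) := by simp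
    rw [hocc1] at hF
    have hApw : A.Pairwise (· < ·) := hpw.of_cons
    obtain ⟨k, hkle, hksum⟩ := park_l1 _ c hcm (A.take t) _ 1 (c + y1) hF le_rfl (by omega)
      (by omega) hcy1
      (fun a ha => hy a (List.mem_cons_of_mem _ (List.take_subset _ _ ha)))
      ((List.Pairwise.sublist (List.take_sublist t A) hApw).imp (fun h => le_of_lt h))
      (by rintro ⟨a, b⟩ hcar; exact hBc a (List.of_mem_zip hcar).1)
    rw [List.take_take] at hksum
    have hK1 : 1 ≤ k ⊓ t := by
      by_contra h0
      have h00 : k ⊓ t = 0 := by omega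
      rw [h00] at hksum
      simp at hksum
      omega
    have ht1 : 1 ≤ t := le_trans hK1 (min_le_right _ _)
    obtain ⟨y2, A₂, rfl⟩ : ∃ y2 A₂, A = y2 :: A₂ := by
      cases A with
      | nil => simp at hksum; omega
      | cons a l => exact ⟨a, l, rfl⟩
    obtain ⟨K', hK'⟩ : ∃ K', k ⊓ t = K' + 1 := ⟨k ⊓ t - 1, by omega⟩
    rw [hK', List.take_succ_cons, List.sum_cons] at hksum
    have hy2 : 1 ≤ y2 := hy y2 (List.mem_cons_of_mem _ (List.mem_cons_self))
    have hy12 : y1 < y2 := (List.pairwise_cons.mp hpw).1 y2 (List.mem_cons_self)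
    have hA₂ : ∀ b ∈ A₂, y2 < b := (List.pairwise_cons.mp hpw.of_cons).1
    have hcge : y1 + 2 ≤ c := by omega
    -- scenario 2
    have hrep : (1 :: (List.replicate (t - 1) 1 ++ B)) = List.replicate t 1 ++ B := by
      obtain ⟨t', rfl⟩ : ∃ t', t = t' + 1 := ⟨t - 1, by omega⟩
      simp [List.replicate_succ]
    have hperm2 : (1 :: c :: (List.replicate (t - 1) 1 ++ B)).Perm x := by
      refine List.Perm.trans ?_ hperm1
      have hswap := List.Perm.swap c 1 (List.replicate (t - 1) 1 ++ B)
      rw [hrep] at hswap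
      exact hswap
    obtain ⟨hlen2, hbdd2, hsome2⟩ := hxinv _ hperm2
    obtain ⟨F2, hF2⟩ := Option.isSome_iff_exists.mp hsome2
    have hF2full : F2 = Finset.Ico 1 ((y1 :: y2 :: A₂).sum + 1) :=
      run_full _ _ _ hlen2 (fun a ha => (hbdd2 a ha).1) hF2
    rw [hF2full, List.zip_cons_cons, List.zip_cons_cons] at hF2
    simp only [parkList] at hF2
    have hy1m : 1 + y1 ≤ (y1 :: y2 :: A₂).sum + 1 := by
      simp only [List.sum_cons]; omega
    have hpark21 : parkOne ((y1 :: y2 :: A₂).sum) ∅ 1 y1 = some (∅ ∪ Finset.Ico 1 (1 + y1)) :=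
      parkOne_eq_some le_rfl hy1m (by simp) (fun i hi h1 _ => absurd h1 (by omega))
    rw [hpark21] at hF2
    simp only [Option.bind_some] at hF2
    rcases le_or_gt (c + y2) ((y1 :: y2 :: A₂).sum + 1) with hcy2 | hcy2
    swap
    · have hnone : parkOne ((y1 :: y2 :: A₂).sum) (∅ ∪ Finset.Ico 1 (1 + y1)) c y2 = none :=
        parkOne_none (fun j hj1 hj2 => (by omega : False).elim)
      rw [hnone] at hF2
      simp at hF2
    have hpark22 : parkOne ((y1 :: y2 :: A₂).sum) (∅ ∪ Finset.Ico 1 (1 + y1)) c y2 =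
        some ((∅ ∪ Finset.Ico 1 (1 + y1)) ∪ Finset.Ico c (c + y2)) := by
      refine parkOne_eq_some le_rfl hcy2 ?_ (fun i hi h1 _ => absurd h1 (by omega))
      intro kk hkk
      simp only [Finset.mem_Ico] at hkk
      simp only [Finset.empty_union, Finset.mem_Ico]
      omega
    rw [hpark22] at hF2
    simp only [Option.bind_some] at hF2
    have hocc2 : ((∅ : Finset ℕ) ∪ Finset.Ico 1 (1 + y1)) ∪ Finset.Ico c (c + y2) =
        Finset.Ico 1 (1 + y1) ∪ Finset.Ico c (c + y2) := by simp
    rw [hocc2, zipRep] at hF2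
    obtain ⟨j', hj'le, hj'sum⟩ := park_l1 _ c hcm (A₂.take (t - 1)) _ (1 + y1) (c + y2) hF2
      (by omega) (by omega) (by omega) hcy2
      (fun a ha => hy a (List.mem_cons_of_mem _ (List.mem_cons_of_mem _
        (List.take_subset _ _ ha))))
      ((List.Pairwise.sublist (List.take_sublist _ _) (hpw.of_cons.of_cons)).imp
        (fun h => le_of_lt h))
      (by rintro ⟨a, b⟩ hcar; exact hBc a (List.of_mem_zip hcar).1)
    rw [List.take_take] at hj'sum
    exact absurd (by omega) (arith_contra y1 y2 A₂ hy12 hA₂ K' (j' ⊓ (t - 1)))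
  · -- easy direction: the all-ones list is an invariant assortment
    intro x hx
    simp only [Set.mem_singleton_iff] at hx
    subst hx
    simp only [PAinv, Set.mem_setOf_eq]
    intro x' hperm
    rw [List.perm_replicate] at hperm
    subst hperm
    have hsum1 : 1 ≤ y.sum := by
      cases y with
      | nil => exact absurd rfl hne
      | cons a l =>
        have := hy a (List.mem_cons_self)
        simp only [List.sum_cons]
        omega
    refine ⟨by simp, ?_, ?_⟩
    · intro a ha
      have h1 := List.eq_of_mem_replicate ha
      subst h1
      exact ⟨le_rfl, hsum1⟩
    · have h0 := ones_park y.sum y 0 (fun l hl => hy l hl) (by simp)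
      rw [show Finset.Ico 1 (0 + 1) = (∅ : Finset ℕ) by simp] at h0
      rw [h0]
      rfl
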